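/- Let C be a nonempty small category in which all objects are isomorphic, let x be an object of C, and let M = Hom_C(x,x) be its endomorphism monoid, regarded as a category with one object. Let J be the category with the same objects as C and exactly one morphism between each ordered pair of objects. Then C is isomorphic to the product category M × J. -/

import Mathlib

/-!
STATEMENT 3: Let `C` be a nonempty small category in which all objects are isomorphic, let
`x` be an object of `C` and `M = Hom_C(x,x)` its endomorphism monoid, regarded as a
category with one object.  Let `J` be the category with the same objects as `C` and
exactly one morphism between each ordered pair of objects.  Then `C` is isomorphic to the
product category `M × J`.
-/

open CategoryTheory

/-- `Chaotic α`: the category with objects `α` and exactly one morphism between each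
ordered pair of objects. -/
def Chaotic (α : Type u) : Type u := α

instance (α : Type u) : Category.{u} (Chaotic α) where
  Hom _ _ := PUnit
  id _ := PUnit.unit
  comp _ _ := PUnit.unit

theorem iso_singleObj_end_prod_chaotic
    (C : Type u) [SmallCategory C] [Nonempty C]
    (hiso : ∀ a b : C, Nonempty (a ≅ b)) (x : C) :
    Nonempty (Cat.of C ≅ Cat.of (SingleObj (End x) × Chaotic C)) := by
  have φ : ∀ a : C, x ≅ a := fun a => (hiso x a).some
  -- forward functor
  refine ⟨Iso.mk ?F ?G ?hFG ?hGF⟩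
  case F =>
    exact Functor.toCatHom
      { obj := fun a => (SingleObj.star _, (a : Chaotic C))
        map := fun {a b} f =>
          (((φ a).hom ≫ f ≫ (φ b).inv : End x), PUnit.unit)
        map_id := by
          intro a
          refine Prod.ext ?_ rfl
          show (φ a).hom ≫ 𝟙 a ≫ (φ a).inv = (1 : End x)
          simp [End.one_def]
        map_comp := by
          intro a b c f g
          refine Prod.ext ?_ rfl
          show (φ a).hom ≫ (f ≫ g) ≫ (φ c).inv
              = ((φ a).hom ≫ f ≫ (φ b).inv : End x) ≫
                ((φ b).hom ≫ g ≫ (φ c).inv : End x)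
          simp }
  case G =>
    exact Functor.toCatHom
      { obj := fun p => (p.2 : C)
        map := fun {p q} f => (φ p.2).inv ≫ (f.1 : x ⟶ x) ≫ (φ q.2).hom
        map_id := by
          intro p
          show (φ p.2).inv ≫ ((1 : End x) : x ⟶ x) ≫ (φ p.2).hom = 𝟙 _
          exact (by simp : ∀ a : C, (φ a).inv ≫ (1 : End x) ≫ (φ a).hom = 𝟙 a) p.2
        map_comp := by
          intro p q r f g
          show (φ p.2).inv ≫ (((f.1 : End x) ≫ g.1 : End x) : x ⟶ x) ≫ (φ r.2).hom
              = ((φ p.2).inv ≫ (f.1 : x ⟶ x) ≫ (φ q.2).hom) ≫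
                ((φ q.2).inv ≫ (g.1 : x ⟶ x) ≫ (φ r.2).hom)
          exact (by simp : ∀ (a b c : C) (f g : End x), (φ a).inv ≫ ((f ≫ g : End x) : x ⟶ x) ≫ (φ c).hom
              = ((φ a).inv ≫ (f : x ⟶ x) ≫ (φ b).hom) ≫ ((φ b).inv ≫ (g : x ⟶ x) ≫ (φ c).hom))
            p.2 q.2 r.2 f.1 g.1 }
  case hFG =>
    refine Cat.ext ?_
    refine CategoryTheory.Functor.ext (fun a => rfl) ?_
    intro a b f
    exact (by simp : ∀ (a b : C) (f : a ⟶ b),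
      (φ a).inv ≫ ((φ a).hom ≫ f ≫ (φ b).inv) ≫ (φ b).hom = eqToHom rfl ≫ f ≫ eqToHom rfl) a b f
  case hGF =>
    refine Cat.ext ?_
    refine CategoryTheory.Functor.ext (fun p => rfl) ?_
    intro p q f
    refine Prod.ext ?_ rfl
    show ((φ p.2).hom ≫ ((φ p.2).inv ≫ (f.1 : x ⟶ x) ≫ (φ q.2).hom) ≫ (φ q.2).inv : End x)
        = (eqToHom rfl ≫ f ≫ eqToHom rfl).1
    exact (by simp : ∀ (a b : C) (g : End x),
      ((φ a).hom ≫ ((φ a).inv ≫ (g : x ⟶ x) ≫ (φ b).hom) ≫ (φ b).inv : End x)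
        = (eqToHom rfl ≫ (g : SingleObj.star (End x) ⟶ SingleObj.star (End x)) ≫ eqToHom rfl : End x))
      p.2 q.2 f.1
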